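/- If f₁ and f₂ are long-tailed functions on [0,∞) and ∫₀^∞ f₂(y) dy = ∞, then f₁(x) = o(f₁⊗f₂(x)) as x → ∞. -/

import Mathlib

open Filter MeasureTheory Asymptotics

/-- The convolution `u ⊗ v (x) = ∫₀ˣ u(x-y) v(y) dy`. -/
noncomputable def conv (u v : ℝ → ℝ) (x : ℝ) : ℝ := ∫ y in (0:ℝ)..x, u (x - y) * v y

/-- `f` is long-tailed: measurable, locally bounded, nonnegative, eventually positive,
and `f(x - t) ∼ f(x)` as `x → ∞` for each fixed `t`. -/
structure LongTailed (f : ℝ → ℝ) : Prop where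
  meas : Measurable f
  nonneg : ∀ x, 0 ≤ f x
  locBdd : ∀ r : ℝ, ∃ C : ℝ, ∀ x ∈ Set.Icc (0:ℝ) r, f x ≤ C
  evPos : ∀ᶠ x in atTop, 0 < f x
  tail : ∀ t : ℝ, Tendsto (fun x => f (x - t) / f x) atTop (nhds 1)

lemma LT_integrableOn {f₁ f₂ : ℝ → ℝ} (h1 : LongTailed f₁) (h2 : LongTailed f₂)
    {x : ℝ} (hx : 0 ≤ x) :
    IntegrableOn (fun y => f₁ (x - y) * f₂ y) (Set.Icc 0 x) := by
  obtain ⟨C₁, hC₁⟩ := h1.locBdd x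
  obtain ⟨C₂, hC₂⟩ := h2.locBdd x
  apply Measure.integrableOn_of_bounded (M := C₁ * C₂) (by simp)
  · exact ((h1.meas.comp (measurable_const.sub measurable_id)).mul h2.meas).aestronglyMeasurable
  · filter_upwards [ae_restrict_mem measurableSet_Icc] with y hy
    have hy1 : x - y ∈ Set.Icc (0:ℝ) x := ⟨by linarith [hy.1, hy.2], by linarith [hy.1]⟩
    have h1b := hC₁ _ hy1
    have h2b := hC₂ _ hy
    have hn1 := h1.nonneg (x - y); have hn2 := h2.nonneg y
    rw [Real.norm_eq_abs, abs_of_nonneg (by positivity)]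
    exact mul_le_mul h1b h2b hn2 (le_trans hn1 h1b)

lemma key {f₁ f₂ : ℝ → ℝ} (h1 : LongTailed f₁) (h2 : LongTailed f₂)
    {T c : ℝ} (hT : 0 ≤ T) (hc : c < ∫ y in (0:ℝ)..T, f₂ y) :
    ∀ᶠ x in atTop, c * f₁ x ≤ ∫ y in (0:ℝ)..T, f₁ (x - y) * f₂ y := by
  by_contra H
  have hfreq : ∃ᶠ x in atTop,
      (∫ y in (0:ℝ)..T, f₁ (x - y) * f₂ y) < c * f₁ x ∧ 0 < f₁ x ∧ T ≤ x := by
    have h2' : ∀ᶠ x in atTop, 0 < f₁ x ∧ T ≤ x :=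
      h1.evPos.and (eventually_ge_atTop T)
    have h1' := not_eventually.mp H
    simp only [not_le] at h1'
    exact h1'.and_eventually h2'
  have hex : ∀ n : ℕ, ∃ x : ℝ, (n : ℝ) ≤ x ∧
      ((∫ y in (0:ℝ)..T, f₁ (x - y) * f₂ y) < c * f₁ x ∧ 0 < f₁ x ∧ T ≤ x) := by
    intro n
    rcases (frequently_atTop.mp hfreq (n : ℝ)) with ⟨x, hx1, hx2⟩
    exact ⟨x, hx1, hx2⟩
  choose u hu₀ hu using hex
  have hutop : Tendsto u atTop atTop :=
    tendsto_atTop_mono hu₀ tendsto_natCast_atTop_atTop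
  set μ := (volume : Measure ℝ).restrict (Set.Ioc 0 T) with hμ
  have hIoc : ∀ x : ℝ,
      (∫ y in (0:ℝ)..T, f₁ (x - y) * f₂ y) = ∫ y, f₁ (x - y) * f₂ y ∂μ := by
    intro x; rw [intervalIntegral.integral_of_le hT, hμ]
  have hint : ∀ n, IntegrableOn (fun y => f₁ (u n - y) * f₂ y) (Set.Ioc 0 T) := fun n =>
    (LT_integrableOn h1 h2 (le_trans hT (hu n).2.2)).mono_set
      (fun y hy => ⟨le_of_lt hy.1, le_trans hy.2 (hu n).2.2⟩)
  set g : ℕ → ℝ → ℝ := fun n y => f₁ (u n - y) / f₁ (u n) * f₂ y with hg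
  have hgeq : ∀ n y, g n y = (f₁ (u n - y) * f₂ y) / f₁ (u n) := by
    intro n y; simp only [hg]; ring
  have hgint : ∀ n, Integrable (g n) μ := by
    intro n
    have := ((hint n).div_const (f₁ (u n)))
    exact this.congr (Eventually.of_forall fun y => (hgeq n y).symm)
  have hgnonneg : ∀ n y, 0 ≤ g n y := fun n y =>
    mul_nonneg (div_nonneg (h1.nonneg _) (h1.nonneg _)) (h2.nonneg y)
  have hglt : ∀ n, ∫ y, g n y ∂μ < c := by
    intro n
    have hpos := (hu n).2.1
    have heq : (∫ y, g n y ∂μ) = (∫ y, f₁ (u n - y) * f₂ y ∂μ) / f₁ (u n) := by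
      rw [← integral_div]
      exact integral_congr_ae (Eventually.of_forall fun y => hgeq n y)
    rw [heq, div_lt_iff₀ hpos, ← hIoc]
    exact (hu n).1
  have hcpos : 0 ≤ c := le_of_lt (lt_of_le_of_lt (integral_nonneg (hgnonneg 0)) (hglt 0))
  -- Fatou
  have hmeas : ∀ n, Measurable (fun y => ENNReal.ofReal (g n y)) := by
    intro n
    exact (((h1.meas.comp (measurable_const.sub measurable_id)).div_const _).mul
      h2.meas).ennreal_ofReal
  have hFatou := lintegral_liminf_le (μ := μ) (u := atTop) hmeas
  have hlim : ∀ y : ℝ, Tendsto (fun n => g n y) atTop (nhds (f₂ y)) := by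
    intro y
    have := (h1.tail y).comp hutop
    have h' : Tendsto (fun n => f₁ (u n - y) / f₁ (u n) * f₂ y) atTop (nhds (1 * f₂ y)) :=
      this.mul_const _
    simpa using h'
  have hliminf : ∀ y : ℝ,
      liminf (fun n => ENNReal.ofReal (g n y)) atTop = ENNReal.ofReal (f₂ y) := by
    intro y
    exact ((ENNReal.continuous_ofReal.tendsto _).comp (hlim y)).liminf_eq
  have hleft : (∫⁻ y, ENNReal.ofReal (f₂ y) ∂μ) ≤
      liminf (fun n => ∫⁻ y, ENNReal.ofReal (g n y) ∂μ) atTop := by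
    refine le_trans (le_of_eq ?_) hFatou
    exact lintegral_congr fun y => (hliminf y).symm
  have hint2 : Integrable f₂ μ := by
    obtain ⟨C₂, hC₂⟩ := h2.locBdd T
    apply Measure.integrableOn_of_bounded (M := C₂) (by simp)
    · exact h2.meas.aestronglyMeasurable
    · filter_upwards [ae_restrict_mem measurableSet_Ioc] with y hy
      rw [Real.norm_eq_abs, abs_of_nonneg (h2.nonneg y)]
      exact hC₂ y ⟨le_of_lt hy.1, hy.2⟩
  have hJ : (∫⁻ y, ENNReal.ofReal (f₂ y) ∂μ) = ENNReal.ofReal (∫ y, f₂ y ∂μ) :=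
    (ofReal_integral_eq_lintegral_ofReal hint2
      (Eventually.of_forall fun y => h2.nonneg y)).symm
  have hright : liminf (fun n => ∫⁻ y, ENNReal.ofReal (g n y) ∂μ) atTop ≤
      ENNReal.ofReal c := by
    apply liminf_le_of_frequently_le _ (by isBoundedDefault)
    refine Frequently.of_forall fun n => ?_
    rw [← ofReal_integral_eq_lintegral_ofReal (hgint n)
      (Eventually.of_forall fun y => hgnonneg n y)]
    exact ENNReal.ofReal_le_ofReal (le_of_lt (hglt n))
  have hfin : ENNReal.ofReal (∫ y, f₂ y ∂μ) ≤ ENNReal.ofReal c := by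
    rw [← hJ]; exact le_trans hleft hright
  have : (∫ y, f₂ y ∂μ) ≤ c := by
    have := (ENNReal.ofReal_le_ofReal_iff hcpos).mp hfin
    exact this
  have hJc : c < ∫ y, f₂ y ∂μ := by
    rwa [intervalIntegral.integral_of_le hT] at hc
  linarith

/-- If `f₁, f₂` are long-tailed and `∫₀^∞ f₂ = ∞`, then `f₁(x) = o(f₁ ⊗ f₂ (x))`. -/
theorem isLittleO_conv (f₁ f₂ : ℝ → ℝ)
    (h1 : LongTailed f₁) (h2 : LongTailed f₂)
    (hdiv : Tendsto (fun x => ∫ y in (0:ℝ)..x, f₂ y) atTop atTop) :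
    (fun x => f₁ x) =o[atTop] (fun x => conv f₁ f₂ x) := by
  rw [isLittleO_iff]
  intro c hc
  -- pick T with ∫₀^T f₂ > 1/c
  have hc' : 0 < 1 / c := by positivity
  obtain ⟨a, ha⟩ := (tendsto_atTop.mp hdiv (1 / c + 1)).exists_forall_of_atTop
  set T : ℝ := max a 0 with hTdef
  have hT : 0 ≤ T := le_max_right a 0
  have hTa : a ≤ T := le_max_left a 0
  have hcT : 1 / c < ∫ y in (0:ℝ)..T, f₂ y := lt_of_lt_of_le (by linarith) (ha T hTa)
  filter_upwards [key h1 h2 hT hcT, h1.evPos, eventually_ge_atTop T] with x hkey hpos hxT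
  -- conv x ≥ ∫₀^T
  have hi1 : IntegrableOn (fun y => f₁ (x - y) * f₂ y) (Set.Icc 0 x) volume :=
    LT_integrableOn h1 h2 (le_trans hT hxT)
  have hint1 : IntervalIntegrable (fun y => f₁ (x - y) * f₂ y) volume 0 T :=
    IntegrableOn.intervalIntegrable (by
      rw [Set.uIcc_of_le hT]; exact hi1.mono_set (Set.Icc_subset_Icc le_rfl hxT))
  have hint2 : IntervalIntegrable (fun y => f₁ (x - y) * f₂ y) volume T x :=
    IntegrableOn.intervalIntegrable (by
      rw [Set.uIcc_of_le hxT]; exact hi1.mono_set (Set.Icc_subset_Icc hT le_rfl))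
  have hsplit : conv f₁ f₂ x =
      (∫ y in (0:ℝ)..T, f₁ (x - y) * f₂ y) + ∫ y in T..x, f₁ (x - y) * f₂ y :=
    (intervalIntegral.integral_add_adjacent_intervals hint1 hint2).symm
  have htail : 0 ≤ ∫ y in T..x, f₁ (x - y) * f₂ y :=
    intervalIntegral.integral_nonneg hxT
      (fun y _ => mul_nonneg (h1.nonneg _) (h2.nonneg _))
  have hconv : (1 / c) * f₁ x ≤ conv f₁ f₂ x := by
    rw [hsplit]; linarith
  have hconvpos : 0 ≤ conv f₁ f₂ x :=
    le_trans (by positivity) hconv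
  rw [Real.norm_eq_abs, Real.norm_eq_abs, abs_of_nonneg (le_of_lt hpos),
    abs_of_nonneg hconvpos]
  rw [div_mul_eq_mul_div, one_mul] at hconv
  have hmul := mul_le_mul_of_nonneg_left hconv (le_of_lt hc)
  have hcc : c * (f₁ x / c) = f₁ x := by field_simp
  rwa [hcc] at hmul
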